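/- For each n ≥ 1, let C_{2n+1}+e denote the graph obtained from the odd cycle C_{2n+1} by attaching a pendant edge at one vertex. Then the adjacency spectral radii ρ(A(C_{2n+1}+e)) form a strictly decreasing sequence converging to τ^{3/2} = sqrt(2 + sqrt 5), where τ = (1+√5)/2 is the golden ratio. -/

import Mathlib

open Matrix

noncomputable def specRad {m : Type*} [Fintype m] [DecidableEq m]
    (M : Matrix m m ℝ) : ℝ :=
  sSup {r : ℝ | ∃ μ ∈ spectrum ℂ (M.map (Complex.ofReal)), r = ‖μ‖}

/-- The base relation for the graph `C_{2n+1} + e`: vertex `0` is the pendant vertex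
attached at vertex `1`, and vertices `1, ..., 2n+1` form the cycle. -/
def cpeRel (n a b : ℕ) : Prop :=
  (a = 0 ∧ b = 1) ∨ (1 ≤ a ∧ a ≤ 2 * n ∧ b = a + 1) ∨ (a = 2 * n + 1 ∧ b = 1)

instance (n a b : ℕ) : Decidable (cpeRel n a b) := by
  unfold cpeRel; infer_instance

/-- The graph `C_{2n+1} + e`: the odd cycle `C_{2n+1}` with a pendant edge. -/
def cpe (n : ℕ) : SimpleGraph (Fin (2 * n + 2)) where
  Adj a b := a ≠ b ∧ (cpeRel n a.val b.val ∨ cpeRel n b.val a.val)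
  symm := by
    constructor
    rintro a b ⟨h1, h2⟩
    exact ⟨h1.symm, h2.symm⟩
  loopless := by
    constructor
    rintro a ⟨h, -⟩
    exact h rfl

instance (n : ℕ) : DecidableRel (cpe n).Adj :=
  fun a b => inferInstanceAs (Decidable (_ ∧ _))


set_option maxHeartbeats 1000000

lemma mem_spectrum_iff_eigen {m : Type*} [Fintype m] [DecidableEq m]
    (M : Matrix m m ℂ) (μ : ℂ) :
    μ ∈ spectrum ℂ M ↔ ∃ w : m → ℂ, w ≠ 0 ∧ M *ᵥ w = μ • w := by
  rw [← AlgEquiv.spectrum_eq Matrix.toLinAlgEquiv',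
    ← Module.End.hasEigenvalue_iff_mem_spectrum]
  constructor
  · intro h
    obtain ⟨w, hw⟩ := h.exists_hasEigenvector
    refine ⟨w, hw.2, ?_⟩
    have := Module.End.mem_eigenspace_iff.mp hw.1
    rwa [Matrix.toLinAlgEquiv'_apply] at this
  · rintro ⟨w, hw0, hw⟩
    exact Module.End.hasEigenvalue_of_hasEigenvector
      ⟨Module.End.mem_eigenspace_iff.mpr (by rwa [Matrix.toLinAlgEquiv'_apply]), hw0⟩

/-- If a symmetric nonnegative matrix has a strictly positive eigenvector with
eigenvalue `lam ≥ 0`, then its spectral radius is `lam`. -/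
lemma specRad_eq_of_pos_eigenvector {m : Type*} [Fintype m] [DecidableEq m] [Nonempty m]
    (A : Matrix m m ℝ) (hsymm : A.IsSymm) (hnn : ∀ i j, 0 ≤ A i j)
    (v : m → ℝ) (hv : ∀ i, 0 < v i) (lam : ℝ) (hlam : 0 ≤ lam)
    (heig : A *ᵥ v = lam • v) : specRad A = lam := by
  have hAc : ∀ i j, (A.map Complex.ofReal) i j = (A i j : ℂ) := fun i j => rfl
  -- lam is in the spectrum
  have hmem : (lam : ℂ) ∈ spectrum ℂ (A.map Complex.ofReal) := by
    rw [mem_spectrum_iff_eigen]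
    refine ⟨fun i => (v i : ℂ), ?_, ?_⟩
    · intro h
      have := congrFun h (Classical.arbitrary m)
      simp only [Pi.zero_apply, Complex.ofReal_eq_zero] at this
      exact (hv _).ne' this
    · funext i
      have h1 := congrFun heig i
      simp only [Matrix.mulVec, dotProduct, Pi.smul_apply, smul_eq_mul] at h1 ⊢
      simp only [hAc]
      have : (∑ j, (A i j : ℂ) * (v j : ℂ)) = ((∑ j, A i j * v j : ℝ) : ℂ) := by
        push_cast; rfl
      rw [this, h1]
      push_cast; ring
  -- every spectral value has abs ≤ lam
  have hbound : ∀ μ ∈ spectrum ℂ (A.map Complex.ofReal), ‖μ‖ ≤ lam := by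
    intro μ hμ
    rw [mem_spectrum_iff_eigen] at hμ
    obtain ⟨w, hw0, hw⟩ := hμ
    set u : m → ℝ := fun i => ‖w i‖ with hu
    have hun : ∀ i, 0 ≤ u i := fun i => norm_nonneg _
    have hkey : ∀ i, ‖μ‖ * u i ≤ ∑ j, A i j * u j := by
      intro i
      have h1 : ‖μ‖ * u i = ‖∑ j, (A i j : ℂ) * w j‖ := by
        have h0 := congrFun hw i
        simp only [Matrix.mulVec, dotProduct, Pi.smul_apply, smul_eq_mul, hAc] at h0
        rw [show (∑ j, (A i j : ℂ) * w j) = μ * w i from h0, norm_mul]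
      rw [h1]
      refine (norm_sum_le _ _).trans_eq ?_
      refine Finset.sum_congr rfl fun j _ => ?_
      rw [norm_mul, Complex.norm_real, Real.norm_of_nonneg (hnn i j)]
    -- sum against v
    have hsum : ‖μ‖ * ∑ i, v i * u i ≤ lam * ∑ i, v i * u i := by
      calc ‖μ‖ * ∑ i, v i * u i
          = ∑ i, v i * (‖μ‖ * u i) := by
            rw [Finset.mul_sum]; exact Finset.sum_congr rfl fun i _ => by ring
        _ ≤ ∑ i, v i * ∑ j, A i j * u j := by
            refine Finset.sum_le_sum fun i _ => ?_
            exact mul_le_mul_of_nonneg_left (hkey i) (hv i).le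
        _ = ∑ i, ∑ j, v i * (A i j * u j) := by
            exact Finset.sum_congr rfl fun i _ => Finset.mul_sum _ _ _
        _ = ∑ j, ∑ i, v i * (A i j * u j) := Finset.sum_comm
        _ = ∑ j, (∑ i, A j i * v i) * u j := by
            refine Finset.sum_congr rfl fun j _ => ?_
            rw [Finset.sum_mul]
            refine Finset.sum_congr rfl fun i _ => ?_
            have hs : A i j = A j i := by
              conv_lhs => rw [← hsymm, Matrix.transpose_apply]
            rw [hs]; ring
        _ = ∑ j, (lam * v j) * u j := by
            refine Finset.sum_congr rfl fun j _ => ?_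
            have := congrFun heig j
            simp only [Matrix.mulVec, dotProduct, Pi.smul_apply, smul_eq_mul] at this
            rw [this]
        _ = lam * ∑ j, v j * u j := by
            rw [Finset.mul_sum]; exact Finset.sum_congr rfl fun j _ => by ring
    have hpos : 0 < ∑ i, v i * u i := by
      obtain ⟨i, hi⟩ : ∃ i, w i ≠ 0 := by
        by_contra h
        push_neg at h
        exact hw0 (funext fun i => h i)
      refine Finset.sum_pos' (fun j _ => mul_nonneg (hv j).le (hun j)) ⟨i, Finset.mem_univ i, ?_⟩
      exact mul_pos (hv i) (by simpa [hu] using (norm_pos_iff.mpr hi))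
    exact le_of_mul_le_mul_right hsum hpos
  -- conclude
  have hlamS : lam ∈ {r : ℝ | ∃ μ ∈ spectrum ℂ (A.map Complex.ofReal), r = ‖μ‖} :=
    ⟨(lam : ℂ), hmem, by rw [Complex.norm_real, Real.norm_of_nonneg hlam]⟩
  refine le_antisymm ?_ ?_
  · refine csSup_le ⟨lam, hlamS⟩ ?_
    rintro r ⟨μ, hμ, rfl⟩
    exact hbound μ hμ
  · exact le_csSup ⟨lam, by rintro r ⟨μ, hμ, rfl⟩; exact hbound μ hμ⟩ hlamS

/-- `√τ` where `τ` is the golden ratio. -/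
noncomputable def sphi : ℝ := Real.sqrt ((1 + Real.sqrt 5) / 2)

/-- The root function whose root `t_n` gives the spectral radius `t_n + 1/t_n`. -/
def gf (n : ℕ) (t : ℝ) : ℝ := t ^ (2 * n + 1) * (t ^ 4 - t ^ 2 - 1) - (t ^ 4 + t ^ 2 - 1)

lemma sqrt5_gt : (2 : ℝ) < Real.sqrt 5 := by
  nlinarith [Real.sq_sqrt (by norm_num : (5:ℝ) ≥ 0), Real.sqrt_nonneg 5]

lemma sphi_sq : sphi ^ 2 = (1 + Real.sqrt 5) / 2 := by
  rw [sphi, Real.sq_sqrt]; nlinarith [sqrt5_gt]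

lemma sphi_gt_one : 1 < sphi := by
  have h : (1:ℝ) < (1 + Real.sqrt 5) / 2 := by nlinarith [sqrt5_gt]
  calc (1:ℝ) = Real.sqrt 1 := Real.sqrt_one.symm
    _ < sphi := Real.sqrt_lt_sqrt (by norm_num) h

lemma sphi_sq_gt_one : 1 < sphi ^ 2 := by nlinarith [sphi_gt_one]

lemma sphi_quartic : sphi ^ 4 - sphi ^ 2 - 1 = 0 := by
  have h := sphi_sq
  have h5 : Real.sqrt 5 ^ 2 = 5 := Real.sq_sqrt (by norm_num)
  have : sphi ^ 4 = (sphi ^ 2) ^ 2 := by ring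
  rw [this, h]; nlinarith [h5]

lemma sphi_cube_gt_two : 2 < sphi ^ 3 := by
  have h1 := sphi_gt_one
  have h2 := sphi_quartic
  have h3 : (sphi ^ 3) ^ 2 = sphi ^ 2 * sphi ^ 4 := by ring
  -- sphi^6 = sphi^2 * (sphi^2+1) = τ(τ+1) = 2τ+1 = 2 + √5 > 4
  have h4 : (sphi ^ 3) ^ 2 > 4 := by
    rw [h3]
    have hs := sphi_sq
    nlinarith [sqrt5_gt]
  nlinarith [h1]

lemma quartic_nonneg {t : ℝ} (ht : sphi ≤ t) : 0 ≤ t ^ 4 - t ^ 2 - 1 := by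
  have h1 := sphi_gt_one
  have h2 := sphi_quartic
  have ht2 : sphi ^ 2 ≤ t ^ 2 := by nlinarith
  nlinarith [mul_nonneg (sub_nonneg.mpr ht2)
    (by nlinarith [sphi_sq_gt_one] : (0:ℝ) ≤ t ^ 2 + sphi ^ 2 - 1)]

lemma quartic_pos {t : ℝ} (ht : sphi < t) : 0 < t ^ 4 - t ^ 2 - 1 := by
  have h1 := sphi_gt_one
  have h2 := sphi_quartic
  have ht2 : sphi ^ 2 < t ^ 2 := by nlinarith
  nlinarith [mul_pos (sub_pos.mpr ht2)
    (by nlinarith [sphi_sq_gt_one] : (0:ℝ) < t ^ 2 + sphi ^ 2 - 1)]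

lemma gf_strictMonoOn (n : ℕ) (hn : 1 ≤ n) : StrictMonoOn (gf n) (Set.Ici sphi) := by
  intro a ha b hb hab
  simp only [Set.mem_Ici] at ha hb
  have h1 := sphi_gt_one
  have ha1 : 1 < a := lt_of_lt_of_le h1 ha
  have hb1 : 1 < b := lt_of_lt_of_le h1 hb
  have hA : 0 ≤ a ^ 4 - a ^ 2 - 1 := quartic_nonneg ha
  have hpow_le : a ^ (2 * n + 1) ≤ b ^ (2 * n + 1) :=
    pow_le_pow_left₀ (by linarith) hab.le _
  have hb3 : 2 < b ^ 3 := by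
    have : sphi ^ 3 < b ^ 3 := by
      have hsb := lt_of_le_of_lt ha hab
      exact pow_lt_pow_left₀ hsb (by positivity) (by norm_num)
    linarith [sphi_cube_gt_two]
  have hbpow : b ^ 3 ≤ b ^ (2 * n + 1) := pow_le_pow_right₀ hb1.le (by omega)
  have hb2 : 2 < b ^ (2 * n + 1) := lt_of_lt_of_le hb3 hbpow
  have hQ : 0 < b ^ 2 - a ^ 2 := by nlinarith
  have hPQ : 0 < (b ^ 4 - a ^ 4) - (b ^ 2 - a ^ 2) := by
    have hs2 : (1 + Real.sqrt 5) / 2 ≤ a ^ 2 := by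
      rw [← sphi_sq]; nlinarith [sphi_gt_one]
    nlinarith [sqrt5_gt, hQ, hs2]
  have key : b ^ (2 * n + 1) * ((b ^ 4 - a ^ 4) - (b ^ 2 - a ^ 2)) >
      (b ^ 4 - a ^ 4) + (b ^ 2 - a ^ 2) := by
    have hs2 : (1 + Real.sqrt 5) / 2 ≤ a ^ 2 := by
      rw [← sphi_sq]; nlinarith [sphi_gt_one]
    have h2PQ : 2 * ((b ^ 4 - a ^ 4) - (b ^ 2 - a ^ 2)) >
        (b ^ 4 - a ^ 4) + (b ^ 2 - a ^ 2) := by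
      nlinarith [sqrt5_gt, hQ, hs2]
    nlinarith [hb2, hPQ]
  have expand : gf n b - gf n a =
      b ^ (2 * n + 1) * ((b ^ 4 - b ^ 2 - 1) - (a ^ 4 - a ^ 2 - 1)) +
      (b ^ (2 * n + 1) - a ^ (2 * n + 1)) * (a ^ 4 - a ^ 2 - 1) -
      ((b ^ 4 - a ^ 4) + (b ^ 2 - a ^ 2)) := by
    simp only [gf]; ring
  have : 0 < gf n b - gf n a := by
    rw [expand]
    have t1 : b ^ (2 * n + 1) * ((b ^ 4 - b ^ 2 - 1) - (a ^ 4 - a ^ 2 - 1)) =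
        b ^ (2 * n + 1) * ((b ^ 4 - a ^ 4) - (b ^ 2 - a ^ 2)) := by ring
    rw [t1]
    nlinarith [mul_nonneg (by linarith : (0:ℝ) ≤ b ^ (2*n+1) - a ^ (2*n+1)) hA, key]
  linarith

lemma gf_at_sphi (n : ℕ) : gf n sphi < 0 := by
  have h := sphi_quartic
  have h1 := sphi_gt_one
  simp only [gf, h, mul_zero]
  nlinarith

lemma gf_at_two (n : ℕ) : 0 < gf n 2 := by
  have h : (2:ℝ) ^ 1 ≤ 2 ^ (2 * n + 1) := pow_le_pow_right₀ one_le_two (by omega)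
  simp only [gf]
  norm_num at h ⊢
  nlinarith [h]

lemma sphi_lt_two : sphi < 2 := by
  nlinarith [sphi_sq, sqrt5_gt, Real.sq_sqrt (by norm_num : (5:ℝ) ≥ 0),
    Real.sqrt_nonneg 5, sphi_gt_one, Real.sqrt_lt_sqrt (by norm_num : (5:ℝ) ≥ 0) (by norm_num : (5:ℝ) < 9)]

lemma gf_exists_root (n : ℕ) : ∃ t : ℝ, sphi < t ∧ t < 2 ∧ gf n t = 0 := by
  have hc : ContinuousOn (gf n) (Set.Icc sphi 2) := by
    apply Continuous.continuousOn; unfold gf; continuity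
  have hmem : (0:ℝ) ∈ Set.Icc (gf n sphi) (gf n 2) :=
    ⟨(gf_at_sphi n).le, (gf_at_two n).le⟩
  obtain ⟨t, ht, hgt⟩ := intermediate_value_Icc sphi_lt_two.le hc hmem
  refine ⟨t, ?_, ?_, hgt⟩
  · rcases eq_or_lt_of_le ht.1 with h | h
    · exfalso; rw [← h] at hgt; exact (gf_at_sphi n).ne hgt
    · exact h
  · rcases eq_or_lt_of_le ht.2 with h | h
    · exfalso; rw [h] at hgt; exact (gf_at_two n).ne' hgt
    · exact h

/-- The root of `gf n` in `(sphi, 2)`. -/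
noncomputable def tn (n : ℕ) : ℝ := (gf_exists_root n).choose

lemma tn_gt : ∀ n, sphi < tn n := fun n => (gf_exists_root n).choose_spec.1
lemma tn_lt : ∀ n, tn n < 2 := fun n => (gf_exists_root n).choose_spec.2.1
lemma tn_root : ∀ n, gf n (tn n) = 0 := fun n => (gf_exists_root n).choose_spec.2.2
lemma tn_gt_one (n : ℕ) : 1 < tn n := lt_trans sphi_gt_one (tn_gt n)

lemma gf_succ (n : ℕ) (t : ℝ) :
    gf (n + 1) t = t ^ 2 * gf n t + (t ^ 2 - 1) * (t ^ 4 + t ^ 2 - 1) := by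
  simp only [gf]
  have : 2 * (n + 1) + 1 = (2 * n + 1) + 2 := by ring
  rw [this, pow_add]
  ring

lemma tn_succ_lt (n : ℕ) (hn : 1 ≤ n) : tn (n + 1) < tn n := by
  have hp : 0 < gf (n + 1) (tn n) := by
    rw [gf_succ, tn_root, mul_zero, zero_add]
    have h1 := tn_gt_one n
    have h2 := quartic_pos (tn_gt n)
    nlinarith
  by_contra h
  push_neg at h
  have := (gf_strictMonoOn (n + 1) (by omega)).monotoneOn
    (Set.mem_Ici.mpr (tn_gt n).le) (Set.mem_Ici.mpr (tn_gt (n+1)).le) h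
  rw [tn_root] at this
  linarith

lemma tn_strict_anti {m n : ℕ} (hm : 1 ≤ m) (hmn : m < n) : tn n < tn m := by
  induction n with
  | zero => omega
  | succ k ih =>
    rcases Nat.lt_or_ge m k with h | h
    · exact lt_trans (tn_succ_lt k (by omega)) (ih h)
    · have : m = k := by omega
      subst this
      exact tn_succ_lt m hm

lemma tn_tendsto : Filter.Tendsto tn Filter.atTop (nhds sphi) := by
  rw [Metric.tendsto_atTop]
  intro ε hε
  set c := (sphi + ε) ^ 4 - (sphi + ε) ^ 2 - 1 with hc
  have hcpos : 0 < c := quartic_pos (by linarith)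
  have hb1 : 1 < sphi + ε := by linarith [sphi_gt_one]
  have htend : Filter.Tendsto (fun n => (sphi + ε) ^ (2 * n + 1)) Filter.atTop Filter.atTop := by
    refine Filter.Tendsto.comp (tendsto_pow_atTop_atTop_of_one_lt hb1) ?_
    apply Filter.tendsto_atTop_mono (fun n => by omega : ∀ n, n ≤ 2 * n + 1)
    exact Filter.tendsto_id
  obtain ⟨N, hN⟩ := Filter.eventually_atTop.mp
    (htend.eventually_ge_atTop (((sphi + ε) ^ 4 + (sphi + ε) ^ 2 - 1) / c + 1))
  refine ⟨max N 1, fun n hn => ?_⟩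
  have hnN : N ≤ n := le_trans (le_max_left _ _) hn
  have hn1 : 1 ≤ n := le_trans (le_max_right _ _) hn
  have hgf : 0 < gf n (sphi + ε) := by
    have h := hN n hnN
    have : ((sphi + ε) ^ 4 + (sphi + ε) ^ 2 - 1) / c * c =
        (sphi + ε) ^ 4 + (sphi + ε) ^ 2 - 1 := div_mul_cancel₀ _ hcpos.ne'
    simp only [gf, ← hc]
    nlinarith [mul_le_mul_of_nonneg_right h hcpos.le, this, hcpos]
  have hlt : tn n < sphi + ε := by
    by_contra hcon
    push_neg at hcon
    have hmono := (gf_strictMonoOn n hn1).monotoneOn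
      (Set.mem_Ici.mpr (by linarith : sphi ≤ sphi + ε))
      (Set.mem_Ici.mpr (tn_gt n).le) hcon
    rw [tn_root] at hmono
    linarith
  rw [Real.dist_eq, abs_of_pos (by linarith [tn_gt n])]
  linarith [tn_gt n]

lemma sphi_pos : 0 < sphi := lt_trans one_pos sphi_gt_one

lemma xlim_eq : sphi + sphi⁻¹ = Real.sqrt (2 + Real.sqrt 5) := by
  have h0 := sphi_pos
  have h1 := sphi_quartic
  have hsq : (sphi + sphi⁻¹) ^ 2 = 2 + Real.sqrt 5 := by
    have he : (sphi + sphi⁻¹) ^ 2 = sphi ^ 2 + 2 + (sphi ^ 2)⁻¹ := by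
      field_simp; ring
    rw [he, sphi_sq]
    have h5 : Real.sqrt 5 ^ 2 = 5 := Real.sq_sqrt (by norm_num)
    have hne : (1 + Real.sqrt 5) / 2 ≠ 0 := by nlinarith [sqrt5_gt]
    field_simp
    nlinarith [h5]
  rw [← hsq, Real.sqrt_sq (by positivity)]

lemma xn_tendsto :
    Filter.Tendsto (fun n => tn n + (tn n)⁻¹) Filter.atTop
      (nhds (Real.sqrt (2 + Real.sqrt 5))) := by
  rw [← xlim_eq]
  have h1 : Filter.Tendsto tn Filter.atTop (nhds sphi) := tn_tendsto
  exact h1.add (h1.inv₀ sphi_pos.ne')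

lemma x_mono {a b : ℝ} (ha : 1 < a) (hab : a < b) : a + a⁻¹ < b + b⁻¹ := by
  have ha0 : (0:ℝ) < a := by linarith
  have hb0 : (0:ℝ) < b := by linarith
  have key : a + a⁻¹ - (b + b⁻¹) = (a - b) * (a * b - 1) / (a * b) := by
    field_simp; ring
  have h2 : (a - b) * (a * b - 1) / (a * b) < 0 := by
    apply div_neg_of_neg_of_pos
    · apply mul_neg_of_neg_of_pos <;> nlinarith
    · positivity
  linarith [key ▸ h2]

/-- The positive eigenvector of `cpe n`. -/
noncomputable def vvec (n : ℕ) (t : ℝ) : Fin (2 * n + 2) → ℝ := fun i =>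
  if i.val = 0 then t * (t ^ (2 * n + 1) + 1) / (t ^ 2 + 1)
  else t ^ (i.val - 1) + t ^ (2 * n + 2 - i.val)

lemma cpe_adj (n : ℕ) (i j : Fin (2 * n + 2)) :
    (cpe n).Adj i j ↔ i.val ≠ j.val ∧ (cpeRel n i.val j.val ∨ cpeRel n j.val i.val) := by
  constructor
  · rintro ⟨h1, h2⟩; exact ⟨fun h => h1 (Fin.ext h), h2⟩
  · rintro ⟨h1, h2⟩; exact ⟨fun h => h1 (by rw [h]), h2⟩

lemma vvec_zero (n : ℕ) (t : ℝ) (h : 0 < 2 * n + 2) :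
    vvec n t ⟨0, h⟩ = t * (t ^ (2 * n + 1) + 1) / (t ^ 2 + 1) := by
  simp [vvec]

lemma vvec_apply (n : ℕ) (t : ℝ) (c : ℕ) (h : c < 2 * n + 2) (hc : c ≠ 0) :
    vvec n t ⟨c, h⟩ = t ^ (c - 1) + t ^ (2 * n + 2 - c) := by
  simp [vvec, hc]

lemma cpe_eigen (n : ℕ) (hn : 1 ≤ n) (t : ℝ) (ht : 1 < t) (hg : gf n t = 0) :
    (cpe n).adjMatrix ℝ *ᵥ vvec n t = (t + t⁻¹) • vvec n t := by
  have ht0 : (0:ℝ) < t := by linarith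
  have htne : t ≠ 0 := ht0.ne'
  have ht2 : t ^ 2 + 1 ≠ 0 := by positivity
  funext i
  rw [SimpleGraph.adjMatrix_mulVec_apply, SimpleGraph.neighborFinset_eq_filter]
  have hiv := i.isLt
  simp only [Pi.smul_apply, smul_eq_mul]
  obtain h0 | h1 | hmid | hlast : i.val = 0 ∨ i.val = 1 ∨ (2 ≤ i.val ∧ i.val ≤ 2 * n) ∨
      i.val = 2 * n + 1 := by omega
  · -- pendant vertex
    have hieq : i = ⟨0, by omega⟩ := Fin.ext h0
    have hfilt : Finset.univ.filter ((cpe n).Adj i) = {(⟨1, by omega⟩ : Fin (2 * n + 2))} := by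
      ext j
      simp only [Finset.mem_filter, Finset.mem_univ, true_and, Finset.mem_singleton,
        cpe_adj, cpeRel, Fin.ext_iff]
      omega
    have hvi : vvec n t i = t * (t ^ (2 * n + 1) + 1) / (t ^ 2 + 1) := by
      rw [hieq]; exact vvec_zero n t (by omega)
    rw [hfilt, Finset.sum_singleton, hvi, vvec_apply n t 1 (by omega) (by omega)]
    rw [show (1:ℕ) - 1 = 0 by omega, show 2 * n + 2 - 1 = 2 * n + 1 by omega]
    field_simp
    ring
  · -- vertex 1 : uses the characteristic equation
    have hieq : i = ⟨1, by omega⟩ := Fin.ext h1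
    have hfilt : Finset.univ.filter ((cpe n).Adj i) =
        {(⟨0, by omega⟩ : Fin (2 * n + 2)), ⟨2, by omega⟩, ⟨2 * n + 1, by omega⟩} := by
      ext j
      simp only [Finset.mem_filter, Finset.mem_univ, true_and, Finset.mem_insert,
        Finset.mem_singleton, cpe_adj, cpeRel, Fin.ext_iff]
      omega
    rw [hfilt]
    rw [Finset.sum_insert (by simp [Fin.ext_iff]),
      Finset.sum_insert (by simp [Fin.ext_iff]), Finset.sum_singleton,
      vvec_zero n t (by omega), vvec_apply n t 2 (by omega) (by omega),
      vvec_apply n t (2 * n + 1) (by omega) (by omega)]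
    have hvi : vvec n t i = t ^ 0 + t ^ (2 * n + 1) := by
      rw [hieq, vvec_apply n t 1 (by omega) (by omega)]
      rw [show (1:ℕ) - 1 = 0 by omega, show 2 * n + 2 - 1 = 2 * n + 1 by omega]
    rw [hvi]
    rw [show (2:ℕ) - 1 = 1 by omega, show 2 * n + 2 - 2 = 2 * n by omega,
      show 2 * n + 1 - 1 = 2 * n by omega, show 2 * n + 2 - (2 * n + 1) = 1 by omega]
    simp only [gf] at hg
    have hq : t ^ (2 * n + 1) = t ^ (2 * n) * t := pow_succ _ _
    rw [hq] at hg ⊢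
    field_simp
    linear_combination (-1 : ℝ) * hg
  · -- middle cycle vertex
    obtain ⟨a, ha⟩ : ∃ a, i.val = a + 2 := ⟨i.val - 2, by omega⟩
    obtain ⟨b, hb⟩ : ∃ b, 2 * n = a + b + 2 := ⟨2 * n - a - 2, by omega⟩
    have hieq : i = ⟨a + 2, by omega⟩ := Fin.ext ha
    have hfilt : Finset.univ.filter ((cpe n).Adj i) =
        {(⟨a + 1, by omega⟩ : Fin (2 * n + 2)), ⟨a + 3, by omega⟩} := by
      ext j
      simp only [Finset.mem_filter, Finset.mem_univ, true_and, Finset.mem_insert,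
        Finset.mem_singleton, cpe_adj, cpeRel, Fin.ext_iff, ha]
      omega
    have hvi : vvec n t i = t ^ (a + 1) + t ^ (b + 2) := by
      rw [hieq, vvec_apply n t (a + 2) (by omega) (by omega)]
      rw [show a + 2 - 1 = a + 1 by omega, show 2 * n + 2 - (a + 2) = b + 2 by omega]
    rw [hfilt, Finset.sum_insert (by simp [Fin.ext_iff]), Finset.sum_singleton, hvi,
      vvec_apply n t (a + 1) (by omega) (by omega),
      vvec_apply n t (a + 3) (by omega) (by omega)]
    rw [show a + 1 - 1 = a by omega, show 2 * n + 2 - (a + 1) = b + 3 by omega,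
      show a + 3 - 1 = a + 2 by omega, show 2 * n + 2 - (a + 3) = b + 1 by omega]
    field_simp
    ring
  · -- last cycle vertex 2n+1
    obtain ⟨m, rfl⟩ : ∃ m, n = m + 1 := ⟨n - 1, by omega⟩
    have hieq : i = ⟨2 * (m + 1) + 1, by omega⟩ := Fin.ext hlast
    have hfilt : Finset.univ.filter ((cpe (m+1)).Adj i) =
        {(⟨2 * (m+1), by omega⟩ : Fin (2 * (m+1) + 2)), ⟨1, by omega⟩} := by
      ext j
      simp only [Finset.mem_filter, Finset.mem_univ, true_and, Finset.mem_insert,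
        Finset.mem_singleton, cpe_adj, cpeRel, Fin.ext_iff, hlast]
      omega
    have hvi : vvec (m+1) t i = t ^ (2 * m + 2) + t ^ 1 := by
      rw [hieq, vvec_apply (m+1) t (2 * (m+1) + 1) (by omega) (by omega)]
      rw [show 2 * (m+1) + 1 - 1 = 2 * m + 2 by omega,
        show 2 * (m+1) + 2 - (2 * (m+1) + 1) = 1 by omega]
    rw [hfilt, Finset.sum_insert (by simp [Fin.ext_iff]), Finset.sum_singleton, hvi,
      vvec_apply (m+1) t (2 * (m+1)) (by omega) (by omega),
      vvec_apply (m+1) t 1 (by omega) (by omega)]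
    rw [show 2 * (m+1) - 1 = 2 * m + 1 by omega,
      show 2 * (m+1) + 2 - 2 * (m+1) = 2 by omega,
      show (1:ℕ) - 1 = 0 by omega,
      show 2 * (m+1) + 2 - 1 = 2 * m + 3 by omega]
    field_simp
    ring

lemma specRad_cpe (n : ℕ) (hn : 1 ≤ n) :
    specRad ((cpe n).adjMatrix ℝ) = tn n + (tn n)⁻¹ := by
  have ht := tn_gt_one n
  have ht0 : (0:ℝ) < tn n := by linarith
  haveI : Nonempty (Fin (2 * n + 2)) := ⟨⟨0, by omega⟩⟩
  apply specRad_eq_of_pos_eigenvector _ (SimpleGraph.isSymm_adjMatrix _)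
    (fun i j => by rw [SimpleGraph.adjMatrix_apply]; split <;> norm_num)
    (vvec n (tn n)) ?_ _ (by positivity)
    (cpe_eigen n hn (tn n) ht (tn_root n))
  intro i
  by_cases h : i.val = 0
  · simp only [vvec, h, if_true]
    have h1 : (0:ℝ) < tn n * ((tn n) ^ (2 * n + 1) + 1) := by positivity
    have h2 : (0:ℝ) < (tn n) ^ 2 + 1 := by positivity
    exact div_pos h1 h2
  · simp only [vvec, h, if_false]
    positivity

/-- The adjacency spectral radii of the graphs `C_{2n+1} + e` form a strictly decreasing
sequence (for `n ≥ 1`) converging to `τ^{3/2} = √(2 + √5)`. -/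
theorem stmt_11 :
    (∀ m n : ℕ, 1 ≤ m → m < n →
      specRad ((cpe n).adjMatrix ℝ) < specRad ((cpe m).adjMatrix ℝ)) ∧
    Filter.Tendsto (fun n => specRad ((cpe n).adjMatrix ℝ)) Filter.atTop
      (nhds (Real.sqrt (2 + Real.sqrt 5))) := by
  constructor
  · intro m n hm hmn
    rw [specRad_cpe n (by omega), specRad_cpe m hm]
    exact x_mono (tn_gt_one n) (tn_strict_anti hm hmn)
  · refine Filter.Tendsto.congr' ?_ xn_tendsto
    filter_upwards [Filter.eventually_ge_atTop 1] with n hn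
    exact (specRad_cpe n hn).symm
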